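/- arXiv:2406.00753 — 5 statements merged into one kernel-verified Lean document; each statement's English description precedes it below -/
import Mathlib

section
/- Let sat : ℝ → ℝ be defined by sat(r) = min{1, max{−1, r}}, and let c₀ be a constant with 0 < c₀ < 1/2. Then the planar system ẋ = −c₀·sat(z), ż = −sat(z−x) is globally asymptotically stable at the origin: (0,0) is an equilibrium and there exists β of class KL such that every solution satisfies |(x(t), z(t))| ≤ β(|(x(0), z(0))|, t) for all t ≥ 0. -/
open Set Filter MeasureTheory InnerProductSpace

noncomputable section

/-- Class `K` functions: continuous on `[0,∞)`, strictly increasing, zero at zero. -/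
def ClassK (α : ℝ → ℝ) : Prop :=
  ContinuousOn α (Ici 0) ∧ StrictMonoOn α (Ici 0) ∧ α 0 = 0

/-- Class `K∞` functions: class `K` and unbounded. -/
def ClassKInf (α : ℝ → ℝ) : Prop :=
  ClassK α ∧ ∀ M : ℝ, ∃ r ∈ Ici (0:ℝ), M < α r

/-- Class `P` functions: continuous, positive for positive arguments, nonnegative at zero. -/
def ClassP (α : ℝ → ℝ) : Prop :=
  ContinuousOn α (Ici 0) ∧ (∀ r > 0, 0 < α r) ∧ 0 ≤ α 0

/-- Class `PD` (positive definite) functions: continuous, positive for positive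
arguments, zero at zero. -/
def ClassPD (α : ℝ → ℝ) : Prop :=
  ContinuousOn α (Ici 0) ∧ (∀ r > 0, 0 < α r) ∧ α 0 = 0

/-- Class `KL` functions. -/
def ClassKL (β : ℝ → ℝ → ℝ) : Prop :=
  ContinuousOn (Function.uncurry β) (Ici 0 ×ˢ Ici 0) ∧
  (∀ t ≥ 0, ClassK (fun s => β s t)) ∧
  (∀ s > 0, AntitoneOn (fun t => β s t) (Ici 0) ∧
    Tendsto (fun t => β s t) atTop (nhds 0))

/-- The saturation function `sat(r) = min{1, max{−1, r}}`. -/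
def sat (r : ℝ) : ℝ := min 1 (max (-1) r)



lemma sat_eq (r : ℝ) : sat r = (|r+1| - |r-1|)/2 := by
  rcases le_total r (-1) with h | h
  · rw [sat, max_eq_left h, min_eq_right (by linarith : (-1:ℝ) ≤ 1),
      abs_of_nonpos (by linarith), abs_of_nonpos (by linarith)]
    ring
  · rcases le_total r 1 with h2 | h2
    · rw [sat, max_eq_right h, min_eq_right h2, abs_of_nonneg (by linarith),
        abs_of_nonpos (by linarith)]
      ring
    · rw [sat, max_eq_right h, min_eq_left h2, abs_of_nonneg (by linarith),
        abs_of_nonneg (by linarith)]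
      ring

lemma sat_lipschitz (a b : ℝ) : |sat a - sat b| ≤ |a - b| := by
  rw [sat_eq, sat_eq]
  have h1 : abs (|a+1| - |b+1|) ≤ |a - b| := by
    have := abs_abs_sub_abs_le_abs_sub (a+1) (b+1)
    simpa using this
  have h2 : abs (|a-1| - |b-1|) ≤ |a - b| := by
    have := abs_abs_sub_abs_le_abs_sub (a-1) (b-1)
    simpa [sub_sub_sub_cancel_right] using this
  calc |(|a+1| - |a-1|)/2 - (|b+1| - |b-1|)/2|
      = |((|a+1| - |b+1|) - (|a-1| - |b-1|))/2| := by ring_nf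
    _ ≤ (abs (|a+1| - |b+1|) + abs (|a-1| - |b-1|))/2 := by
        rw [abs_div]
        simp only [abs_two]
        gcongr
        exact abs_sub (|a+1| - |b+1|) (|a-1| - |b-1|)
    _ ≤ |a - b| := by linarith

lemma sat_abs_le_one (r : ℝ) : |sat r| ≤ 1 := by
  rw [abs_le]; constructor
  · exact le_min (by norm_num) (le_max_left _ _)
  · exact min_le_left _ _

lemma sat_of_abs_le (r : ℝ) (h : |r| ≤ 1) : sat r = r := by
  rw [abs_le] at h
  rw [sat, max_eq_right h.1, min_eq_right h.2]

lemma sat_sq (r : ℝ) : (sat r)^2 = min (r^2) 1 := by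
  rcases le_total r (-1) with h | h
  · rw [sat, max_eq_left h, min_eq_right (by linarith : (-1:ℝ) ≤ 1),
      min_eq_right (by nlinarith : (1:ℝ) ≤ r^2)]
    ring
  · rcases le_total r 1 with h2 | h2
    · rw [sat_of_abs_le r (abs_le.2 ⟨h, h2⟩), min_eq_left (by nlinarith)]
    · rw [sat, max_eq_right (by linarith), min_eq_left h2,
        min_eq_right (by nlinarith)]
      ring

lemma abs_sat_le (r : ℝ) : |sat r| ≤ |r| := by
  have := sat_lipschitz r 0
  simp [sat] at this
  simpa [sat] using this





noncomputable def S (r : ℝ) : ℝ := ((r+1)*|r+1| - (r-1)*|r-1| - 2)/4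

lemma hasDerivAt_mul_abs (s : ℝ) : HasDerivAt (fun u : ℝ => u * |u|) (2*|s|) s := by
  rcases lt_trichotomy s 0 with h | h | h
  · have : HasDerivAt (fun u : ℝ => -(u*u)) (2*|s|) s := by
      have h2 := ((hasDerivAt_id s).mul (hasDerivAt_id s)).neg
      rw [abs_of_neg h]
      exact h2.congr_deriv (by simp; ring)
    refine this.congr_of_eventuallyEq ?_
    filter_upwards [Iio_mem_nhds h] with u hu
    rw [abs_of_neg hu]; ring
  · subst h
    rw [hasDerivAt_iff_tendsto_slope]
    have : ∀ u ∈ ({(0:ℝ)}ᶜ : Set ℝ), |u| = slope (fun u : ℝ => u * |u|) 0 u := by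
      intro u hu
      simp only [slope, vsub_eq_sub, sub_zero, abs_zero, mul_zero]
      rw [smul_eq_mul, ← mul_assoc, inv_mul_cancel₀ (by simpa using hu), one_mul]
    have habs : Tendsto (fun u : ℝ => |u|) (nhdsWithin 0 {(0:ℝ)}ᶜ) (nhds 0) := by
      have : Tendsto (fun u : ℝ => |u|) (nhds 0) (nhds 0) := by
        simpa using continuous_abs.tendsto (0:ℝ)
      exact this.mono_left nhdsWithin_le_nhds
    simpa using habs.congr' (eventually_nhdsWithin_of_forall this)
  · have : HasDerivAt (fun u : ℝ => u*u) (2*|s|) s := by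
      have h2 := (hasDerivAt_id s).mul (hasDerivAt_id s)
      rw [abs_of_pos h]
      exact h2.congr_deriv (by simp; ring)
    refine this.congr_of_eventuallyEq ?_
    filter_upwards [Ioi_mem_nhds h] with u hu
    rw [abs_of_pos hu]

lemma hasDerivAt_S (r : ℝ) : HasDerivAt S (sat r) r := by
  have h1 : HasDerivAt (fun u : ℝ => (u+1) * |u+1|) (2*|r+1|) r := by
    have := (hasDerivAt_mul_abs (r+1)).comp r ((hasDerivAt_id r).add_const 1)
    simpa [Function.comp_def] using this
  have h2 : HasDerivAt (fun u : ℝ => (u-1) * |u-1|) (2*|r-1|) r := by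
    have := (hasDerivAt_mul_abs (r-1)).comp r ((hasDerivAt_id r).sub_const 1)
    simpa [Function.comp_def] using this
  have := ((h1.sub h2).sub_const 2).div_const 4
  rw [sat_eq]
  exact this.congr_deriv (by ring)

lemma S_cases (r : ℝ) : (|r| ≤ 1 ∧ S r = r^2/2) ∨ (1 ≤ |r| ∧ S r = |r| - 1/2) := by
  rcases le_total r (-1) with h | h
  · right
    refine ⟨by rw [abs_of_nonpos (by linarith)]; linarith, ?_⟩
    rw [S, abs_of_nonpos (by linarith : r+1 ≤ 0), abs_of_nonpos (by linarith : r-1 ≤ 0),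
      abs_of_nonpos (by linarith)]
    ring
  · rcases le_total r 1 with h2 | h2
    · left
      refine ⟨abs_le.2 ⟨h, h2⟩, ?_⟩
      rw [S, abs_of_nonneg (by linarith : 0 ≤ r+1), abs_of_nonpos (by linarith : r-1 ≤ 0)]
      ring
    · right
      refine ⟨by rw [abs_of_nonneg (by linarith)]; linarith, ?_⟩
      rw [S, abs_of_nonneg (by linarith : (0:ℝ) ≤ r+1), abs_of_nonneg (by linarith : (0:ℝ) ≤ r-1),
        abs_of_nonneg (by linarith)]
      ring

lemma S_nonneg (r : ℝ) : 0 ≤ S r := by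
  rcases S_cases r with ⟨h, he⟩ | ⟨h, he⟩ <;> rw [he] <;> [positivity; linarith]

lemma S_le_abs (r : ℝ) : S r ≤ |r| := by
  rcases S_cases r with ⟨h, he⟩ | ⟨h, he⟩ <;> rw [he]
  · nlinarith [abs_nonneg r, sq_abs r]
  · linarith

lemma S_lower (r : ℝ) : min (r^2) |r| ≤ 2 * S r := by
  rcases S_cases r with ⟨h, he⟩ | ⟨h, he⟩ <;> rw [he]
  · exact le_trans (min_le_left _ _) (by linarith)
  · exact le_trans (min_le_right _ _) (by linarith)

lemma two_min_S_le (r : ℝ) : 2 * min (S r) (1/2) ≤ min (r^2) 1 := by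
  rcases S_cases r with ⟨h, he⟩ | ⟨h, he⟩ <;> rw [he]
  · have h2 : r^2 ≤ 1 := by nlinarith [sq_abs r, abs_nonneg r]
    rw [min_eq_left h2, min_eq_left (by linarith)]; linarith
  · rw [min_eq_right (by nlinarith [sq_abs r, sq_nonneg (|r| - 1)] : (1:ℝ) ≤ r^2), min_eq_right (by linarith : (1:ℝ)/2 ≤ |r| - 1/2)]
    norm_num



lemma key_ineq (c₀ x z : ℝ) (h1 : 0 < c₀) (h2 : c₀ < 1/2) :
    c₀*(1-2*c₀) * ((sat (z-x))^2 + (sat x)^2)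
      ≤ (sat (z-x))^2 - c₀ * (sat (z-x) * sat z) + c₀ * (sat x * sat z) := by
  set e := z - x with he
  have hBA : |sat z - sat x| ≤ |e| := by
    have := sat_lipschitz z x
    simpa [he] using this
  have hA1 : |sat x| ≤ 1 := sat_abs_le_one x
  have hB1 : |sat z| ≤ 1 := sat_abs_le_one z
  rcases le_total |e| 1 with hc | hc
  · -- |e| ≤ 1, sat e = e
    rw [sat_of_abs_le e hc]
    set A := sat x with hA
    set B := sat z with hB
    have hd : |B - A| ≤ |e| := hBA
    -- bounds used by nlinarith
    have hb1 : e * B ≤ |e| * |A| + |e| * |e| := by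
      calc e * B ≤ |e * B| := le_abs_self _
        _ = |e| * |B| := abs_mul _ _
        _ ≤ |e| * (|A| + |e|) := by
            have : |B| ≤ |A| + |e| := by
              calc |B| = |A + (B - A)| := by ring_nf
                _ ≤ |A| + |B - A| := abs_add_le _ _
                _ ≤ |A| + |e| := by linarith
            exact mul_le_mul_of_nonneg_left this (abs_nonneg e)
        _ = |e| * |A| + |e| * |e| := by ring
    have hb2 : -(A*(B-A)) ≤ |A| * |e| := by
      calc -(A*(B-A)) ≤ |A*(B-A)| := neg_le_abs _
        _ = |A| * |B-A| := abs_mul _ _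
        _ ≤ |A| * |e| := mul_le_mul_of_nonneg_left hd (abs_nonneg A)
    have t1 : c₀*(e*B) ≤ c₀*(|e| * |A| + |e| * |e|) := mul_le_mul_of_nonneg_left hb1 h1.le
    have t2 : c₀*(-(A*(B-A))) ≤ c₀*(|A| * |e|) := mul_le_mul_of_nonneg_left hb2 h1.le
    have hAB' : c₀*(A*B) = c₀*(A*A) + c₀*(A*(B-A)) := by ring
    have hAA' : c₀*(A*A) = c₀*(|A| * |A|) := by rw [abs_mul_abs_self]
    have he2 : e^2 = |e| * |e| := by rw [sq, abs_mul_abs_self]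
    have ha2 : A^2 = |A| * |A| := by rw [sq, abs_mul_abs_self]
    have main : c₀*(1-2*c₀) * (|e| * |e| + |A| * |A|)
        ≤ (1-c₀)*(|e| * |e|) + c₀*(|A| * |A|) - 2*(c₀*(|e| * |A|)) := by
      nlinarith [sq_nonneg (|e| - 2*c₀*|A|), sq_nonneg ((1-2*c₀)*|e|)]
    have hgl : c₀*(1-2*c₀)*(e^2+A^2) = c₀*(1-2*c₀) * (|e| * |e| + |A| * |A|) := by
      rw [he2, ha2]
    linarith
  · -- 1 ≤ |e|
    have hu2 : (sat e)^2 = 1 := by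
      rw [sat_sq, min_eq_right]
      nlinarith [sq_abs e, sq_nonneg (|e| - 1)]
    have h3 : |sat e * sat z| ≤ 1 := by
      rw [abs_mul]
      exact mul_le_one₀ (sat_abs_le_one e) (abs_nonneg _) hB1
    have h4 : |sat x * sat z| ≤ 1 := by
      rw [abs_mul]
      exact mul_le_one₀ hA1 (abs_nonneg _) hB1
    have hA2 : (sat x)^2 ≤ 1 := by nlinarith [sq_abs (sat x), sq_nonneg (|sat x| - 1), abs_nonneg (sat x)]
    have h3' := abs_le.1 h3
    have h4' := abs_le.1 h4
    rw [hu2]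
    have t1 : c₀*(sat e * sat z) ≤ c₀*1 := mul_le_mul_of_nonneg_left h3'.2 h1.le
    have t2 : c₀*(-1) ≤ c₀*(sat x * sat z) := mul_le_mul_of_nonneg_left h4'.1 h1.le
    have hε : (0:ℝ) ≤ c₀*(1-2*c₀) := by nlinarith
    have hb : c₀*(1-2*c₀)*(1 + (sat x)^2) ≤ 2*(c₀*(1-2*c₀)) :=
      by nlinarith [mul_le_mul_of_nonneg_left hA2 hε]
    have hb2 : 2*(c₀*(1-2*c₀)) ≤ 1-2*c₀ := by nlinarith [sq_nonneg (1-2*c₀)]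
    linarith



noncomputable def G (v : ℝ) : ℝ := if v ≤ 0 then v else v * Real.exp v

lemma G_zero : G 0 = 0 := by simp [G]

lemma G_of_nonneg {v : ℝ} (h : 0 ≤ v) : G v = v * Real.exp v := by
  rcases eq_or_lt_of_le h with h' | h'
  · simp [G, ← h']
  · rw [G, if_neg (not_le.2 h')]

lemma G_strictMono : StrictMono G := by
  intro a b hab
  rw [G, G]
  split_ifs with ha hb hb
  · exact hab
  · have hb' : 0 < b := not_le.1 hb
    calc a ≤ 0 := ha
      _ < b * Real.exp b := by positivity
  · exact absurd (hab.trans_le hb) (not_lt.2 (not_le.1 ha).le)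
  · have ha' : 0 < a := not_le.1 ha
    exact mul_lt_mul'' hab (Real.exp_lt_exp.2 hab) ha'.le (Real.exp_pos a).le

lemma G_continuous : Continuous G := by
  rw [show G = fun v => if v ≤ 0 then v else v * Real.exp v from rfl]
  apply Continuous.if_le continuous_id (continuous_id.mul Real.continuous_exp)
    continuous_id continuous_const
  intro v hv
  simp only [id_eq] at hv
  simp [hv]

lemma G_surjective : Function.Surjective G := by
  apply Continuous.surjective G_continuous
  · apply tendsto_atTop_mono' _ _ tendsto_id
    filter_upwards [eventually_gt_atTop (0:ℝ)] with v hv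
    simp only [id_eq]
    rw [G, if_neg (not_le.2 hv)]
    nlinarith [Real.one_le_exp hv.le]
  · apply Tendsto.congr' _ tendsto_id
    filter_upwards [eventually_lt_atBot (0:ℝ)] with v hv
    rw [G, if_pos hv.le]
    rfl

noncomputable def Giso : ℝ ≃o ℝ := StrictMono.orderIsoOfSurjective G G_strictMono G_surjective

lemma Giso_apply (v : ℝ) : Giso v = G v := rfl

lemma Giso_symm_zero : Giso.symm 0 = 0 := by
  have : Giso 0 = 0 := by rw [Giso_apply, G_zero]
  exact Giso.symm_apply_eq.mpr this.symm

lemma Giso_symm_continuous : Continuous (Giso.symm : ℝ → ℝ) := OrderIso.continuous _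

noncomputable def phi (u : ℝ) : ℝ := max (Real.sqrt (8*u)) (8*u)

lemma phi_mono : Monotone phi := fun u v h =>
  max_le_max (Real.sqrt_le_sqrt (by linarith)) (by linarith)

lemma phi_strictMonoOn : StrictMonoOn phi (Ici 0) := by
  intro u hu v _ huv
  exact max_lt_max (Real.sqrt_lt_sqrt (by simp at hu; linarith) (by linarith)) (by linarith)

lemma phi_continuous : Continuous phi :=
  (Real.continuous_sqrt.comp (continuous_const.mul continuous_id)).max
    (continuous_const.mul continuous_id)

lemma phi_zero : phi 0 = 0 := by simp [phi]

lemma norm_bound (a b : ℝ) : max |a| |b| ≤ phi (S (b-a) + S a) := by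
  set e := b - a with he
  set V := S e + S a with hV
  have hV0 : 0 ≤ V := add_nonneg (S_nonneg e) (S_nonneg a)
  set n := max |a| |b| with hn
  set m := max |e| |a| with hm
  have hn0 : 0 ≤ n := le_max_iff.2 (Or.inl (abs_nonneg a))
  have hm0 : 0 ≤ m := le_max_iff.2 (Or.inl (abs_nonneg e))
  have hnm : n ≤ 2*m := by
    have hb' : |b| ≤ |a| + |e| := by
      calc |b| = |a + e| := by rw [he]; ring_nf
        _ ≤ |a| + |e| := abs_add_le _ _
    have h1 : |a| ≤ m := le_max_right _ _
    have h2 : |e| ≤ m := le_max_left _ _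
    rw [hn]
    exact max_le (by linarith) (by linarith)
  have hkey : min (n^2) n ≤ 8*V := by
    have hsum : min (m^2) m ≤ min (e^2) |e| + min (a^2) |a| := by
      rcases max_cases |e| |a| with ⟨hme, _⟩ | ⟨hma, _⟩
      · rw [hm, hme]
        have : (0:ℝ) ≤ min (a^2) |a| := le_min (sq_nonneg a) (abs_nonneg a)
        have he2 : |e|^2 = e^2 := sq_abs e
        rw [he2]
        linarith
      · rw [hm, hma]
        have : (0:ℝ) ≤ min (e^2) |e| := le_min (sq_nonneg e) (abs_nonneg e)
        have ha2 : |a|^2 = a^2 := sq_abs a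
        rw [ha2]
        linarith
    have h8 : min (e^2) |e| + min (a^2) |a| ≤ 2*V := by
      have := S_lower e; have := S_lower a
      rw [hV]; linarith
    have h4 : min (n^2) n ≤ 4 * min (m^2) m := by
      rcases le_total (m^2) m with hc | hc
      · rw [min_eq_left hc]
        calc min (n^2) n ≤ n^2 := min_le_left _ _
          _ ≤ 4*m^2 := by nlinarith
      · rw [min_eq_right hc]
        calc min (n^2) n ≤ n := min_le_right _ _
          _ ≤ 4*m := by linarith
    linarith
  rcases le_total n 1 with hc | hc
  · have hn2 : n^2 ≤ 8*V := by
      have : min (n^2) n = n^2 := min_eq_left (by nlinarith)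
      linarith [hkey, this.symm.le]
    calc n ≤ Real.sqrt (8*V) := (Real.le_sqrt hn0 (by linarith)).2 hn2
      _ ≤ phi V := le_max_left _ _
  · have : min (n^2) n = n := min_eq_right (by nlinarith)
    calc n ≤ 8*V := by linarith [hkey]
      _ ≤ phi V := le_max_right _ _

lemma min_S_combine (u v : ℝ) (hu2 : 2 * min (S u) (1/2) ≤ min (u^2) 1)
    (hv2 : 2 * min (S v) (1/2) ≤ min (v^2) 1) :
    min (S u + S v) 1 ≤ min (u^2) 1 + min (v^2) 1 := by
  have h1 : min (S u + S v) 1 ≤ 2*min (S u) (1/2) + 2*min (S v) (1/2) := by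
    rcases le_total (S u) (1/2) with h | h
    · rcases le_total (S v) (1/2) with h' | h'
      · rw [min_eq_left h, min_eq_left h']
        calc min (S u + S v) 1 ≤ S u + S v := min_le_left _ _
          _ ≤ 2*S u + 2*S v := by linarith [S_nonneg u, S_nonneg v]
      · rw [min_eq_right h']
        have : (0:ℝ) ≤ min (S u) (1/2) := le_min (S_nonneg u) (by norm_num)
        calc min (S u + S v) 1 ≤ 1 := min_le_right _ _
          _ ≤ _ := by linarith
    · rw [min_eq_right h]
      have : (0:ℝ) ≤ min (S v) (1/2) := le_min (S_nonneg v) (by norm_num)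
      calc min (S u + S v) 1 ≤ 1 := min_le_right _ _
        _ ≤ _ := by linarith
  linarith


/-- **Example 1**: the planar system with saturated dynamics
`ẋ = −c₀·sat(z)`, `ż = −sat(z−x)` is globally asymptotically stable at the origin
whenever `0 < c₀ < 1/2`. -/
theorem stmt_12 (c₀ : ℝ) (hc₀ : 0 < c₀) (hc₀' : c₀ < 1 / 2) :
    (-c₀ * sat 0 = 0 ∧ -sat (0 - 0) = 0) ∧
    ∃ β : ℝ → ℝ → ℝ, ClassKL β ∧
      ∀ x z : ℝ → ℝ,
        (∀ t ≥ 0, HasDerivAt x (-c₀ * sat (z t)) t) →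
        (∀ t ≥ 0, HasDerivAt z (-sat (z t - x t)) t) →
        ∀ t ≥ 0, ‖(x t, z t)‖ ≤ β ‖(x 0, z 0)‖ t := by
  have hsat0 : sat 0 = 0 := by norm_num [sat]
  constructor
  · constructor
    · rw [hsat0]; ring
    · norm_num [hsat0]
  set ε := c₀ * (1 - 2*c₀) with hε_def
  have hε : 0 < ε := by rw [hε_def]; nlinarith
  refine ⟨fun s t => phi (Giso.symm (G (3*s) * Real.exp (-(ε*t)))), ⟨?_, ?_, ?_⟩, ?_⟩
  · -- joint continuity
    have hcont : Continuous fun p : ℝ × ℝ => phi (Giso.symm (G (3*p.1) * Real.exp (-(ε*p.2)))) := by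
      apply phi_continuous.comp
      apply Giso_symm_continuous.comp
      exact (G_continuous.comp (continuous_const.mul continuous_fst)).mul
        (Real.continuous_exp.comp (continuous_const.mul continuous_snd).neg)
    exact hcont.continuousOn
  · -- ClassK in s for each t ≥ 0
    intro t _
    have harg : ∀ s : ℝ, 0 ≤ s → 0 ≤ Giso.symm (G (3*s) * Real.exp (-(ε*t))) := by
      intro s hs
      have hG : (0:ℝ) ≤ G (3*s) := by
        have := G_strictMono.monotone (by linarith : (0:ℝ) ≤ 3*s)
        rwa [G_zero] at this
      have h0 : (0:ℝ) ≤ G (3*s) * Real.exp (-(ε*t)) := mul_nonneg hG (Real.exp_pos _).le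
      calc (0:ℝ) = Giso.symm 0 := Giso_symm_zero.symm
        _ ≤ _ := Giso.symm.monotone h0
    refine ⟨?_, ?_, ?_⟩
    · have : Continuous fun s : ℝ => phi (Giso.symm (G (3*s) * Real.exp (-(ε*t)))) := by
        apply phi_continuous.comp
        apply Giso_symm_continuous.comp
        exact (G_continuous.comp (continuous_const.mul continuous_id)).mul continuous_const
      exact this.continuousOn
    · intro s1 hs1 s2 hs2 h12
      have m1 : G (3*s1) * Real.exp (-(ε*t)) < G (3*s2) * Real.exp (-(ε*t)) :=
        mul_lt_mul_of_pos_right (G_strictMono (by linarith)) (Real.exp_pos _)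
      exact phi_strictMonoOn (harg s1 hs1) (harg s2 hs2) (Giso.symm.strictMono m1)
    · show phi (Giso.symm (G (3*0) * Real.exp (-(ε*t)))) = 0
      rw [mul_zero, G_zero, zero_mul, Giso_symm_zero, phi_zero]
  · -- decrease in t
    intro s hs
    have hG : (0:ℝ) ≤ G (3*s) := by
      have := G_strictMono.monotone (by linarith : (0:ℝ) ≤ 3*s)
      rwa [G_zero] at this
    constructor
    · intro t1 _ t2 _ h12
      apply phi_mono
      apply Giso.symm.monotone
      apply mul_le_mul_of_nonneg_left _ hG
      exact Real.exp_le_exp.2 (by nlinarith)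
    · have h1 : Tendsto (fun t : ℝ => -(ε*t)) atTop atBot := by
        apply tendsto_neg_atTop_atBot.comp
        exact Tendsto.const_mul_atTop hε tendsto_id
      have h2 : Tendsto (fun t : ℝ => G (3*s) * Real.exp (-(ε*t))) atTop (nhds 0) := by
        have := (Real.tendsto_exp_atBot.comp h1).const_mul (G (3*s))
        simpa using this
      have h3 := ((phi_continuous.comp Giso_symm_continuous).tendsto 0).comp h2
      simpa [Function.comp_def, Giso_symm_zero, phi_zero] using h3
  · -- the solution estimate
    intro x z hx hz t ht
    set s₀ := ‖(x 0, z 0)‖ with hs₀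
    set W : ℝ → ℝ := fun τ => S (z τ - x τ) + S (x τ) with hWdef
    set D : ℝ → ℝ := fun τ =>
      sat (z τ - x τ) * (-sat (z τ - x τ) - -c₀ * sat (z τ)) + sat (x τ) * (-c₀ * sat (z τ)) with hDdef
    have hWd : ∀ τ ∈ Ici (0:ℝ), HasDerivAt W (D τ) τ := by
      intro τ hτ
      have h1 := (hasDerivAt_S (z τ - x τ)).comp τ ((hz τ hτ).sub (hx τ hτ))
      have h2 := (hasDerivAt_S (x τ)).comp τ (hx τ hτ)
      exact h1.add h2
    have hW0 : ∀ τ, 0 ≤ W τ := fun τ => add_nonneg (S_nonneg _) (S_nonneg _)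
    have hDb : ∀ τ, D τ ≤ -ε * min (W τ) 1 := by
      intro τ
      have hk := key_ineq c₀ (x τ) (z τ) hc₀ hc₀'
      have hm : min (W τ) 1 ≤ (sat (z τ - x τ))^2 + (sat (x τ))^2 := by
        have h := min_S_combine (z τ - x τ) (x τ) (two_min_S_le _) (two_min_S_le _)
        rw [sat_sq, sat_sq]
        exact h
      have hmm := mul_le_mul_of_nonneg_left hm hε.le
      have hk' : ε * ((sat (z τ - x τ))^2 + (sat (x τ))^2)
          ≤ (sat (z τ - x τ))^2 - c₀ * (sat (z τ - x τ) * sat (z τ)) + c₀ * (sat (x τ) * sat (z τ)) := by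
        rw [hε_def]; exact hk
      have hDeq : D τ = -((sat (z τ - x τ))^2 - c₀ * (sat (z τ - x τ) * sat (z τ))
          + c₀ * (sat (x τ) * sat (z τ))) := by
        rw [hDdef]; ring
      rw [hDeq]
      linarith
    set y : ℝ → ℝ := fun τ => W τ * Real.exp (W τ) * Real.exp (ε*τ) with hydef
    have hyd : ∀ τ ∈ Ici (0:ℝ),
        HasDerivAt y (Real.exp (ε*τ) * Real.exp (W τ) * ((1 + W τ) * D τ + ε * W τ)) τ := by
      intro τ hτ
      have hw := hWd τ hτ
      have h1 : HasDerivAt (fun u => Real.exp (W u)) (Real.exp (W τ) * D τ) τ := hw.exp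
      have h2 : HasDerivAt (fun u : ℝ => ε * u) ε τ := by
        simpa using (hasDerivAt_id τ).const_mul ε
      have h3 : HasDerivAt (fun u : ℝ => Real.exp (ε*u)) (Real.exp (ε*τ) * ε) τ := h2.exp
      have h4 := (hw.mul h1).mul h3
      exact h4.congr_deriv (by simp only [Pi.mul_apply]; ring)
    have hynonpos : ∀ τ ∈ interior (Ici (0:ℝ)), deriv y τ ≤ 0 := by
      intro τ hτ
      rw [interior_Ici] at hτ
      have hτ' : τ ∈ Ici (0:ℝ) := mem_Ici.2 (le_of_lt hτ)
      rw [(hyd τ hτ').deriv]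
      have hmin : W τ ≤ (1 + W τ) * min (W τ) 1 := by
        rcases le_total (W τ) 1 with h | h
        · rw [min_eq_left h]; nlinarith [hW0 τ]
        · rw [min_eq_right h]; nlinarith [hW0 τ]
      have hfac : (1 + W τ) * D τ + ε * W τ ≤ 0 := by
        have h1 : (1 + W τ) * D τ ≤ (1 + W τ) * (-ε * min (W τ) 1) :=
          mul_le_mul_of_nonneg_left (hDb τ) (by nlinarith [hW0 τ])
        have h2 := mul_le_mul_of_nonneg_left hmin hε.le
        nlinarith
      have hpos : (0:ℝ) ≤ Real.exp (ε*τ) * Real.exp (W τ) :=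
        mul_nonneg (Real.exp_pos _).le (Real.exp_pos _).le
      exact mul_nonpos_of_nonneg_of_nonpos hpos hfac
    have hcont : ContinuousOn y (Ici (0:ℝ)) :=
      fun τ hτ => ((hyd τ hτ).continuousAt).continuousWithinAt
    have hdiff : DifferentiableOn ℝ y (interior (Ici (0:ℝ))) := by
      rw [interior_Ici]
      exact fun τ hτ => ((hyd τ (mem_Ici.2 (le_of_lt hτ))).differentiableAt).differentiableWithinAt
    have hanti : AntitoneOn y (Ici (0:ℝ)) :=
      antitoneOn_of_deriv_nonpos (convex_Ici 0) hcont hdiff hynonpos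
    have hyt : y t ≤ y 0 := hanti self_mem_Ici (mem_Ici.2 ht) ht
    have hy0 : y 0 = W 0 * Real.exp (W 0) := by
      rw [hydef]; simp
    have hW0le : W 0 ≤ 3*s₀ := by
      have h1 := S_le_abs (z 0 - x 0)
      have h2 := S_le_abs (x 0)
      have h3 : |z 0 - x 0| ≤ |z 0| + |x 0| := abs_sub _ _
      have h4 : s₀ = max |x 0| |z 0| := by
        rw [hs₀, Prod.norm_def]
        simp [Real.norm_eq_abs]
      have h5 : |x 0| ≤ max |x 0| |z 0| := le_max_left _ _
      have h6 : |z 0| ≤ max |x 0| |z 0| := le_max_right _ _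
      rw [hWdef]
      simp only []
      rw [h4]
      linarith
    have hG0' : W 0 * Real.exp (W 0) ≤ G (3*s₀) := by
      rw [← G_of_nonneg (hW0 0)]
      exact G_strictMono.monotone hW0le
    have hexp1 : Real.exp (ε*t) * Real.exp (-(ε*t)) = 1 := by
      rw [← Real.exp_add]; simp
    have hGWt : G (W t) ≤ G (3*s₀) * Real.exp (-(ε*t)) := by
      rw [G_of_nonneg (hW0 t)]
      calc W t * Real.exp (W t)
          = (W t * Real.exp (W t) * Real.exp (ε*t)) * Real.exp (-(ε*t)) := by
            rw [mul_assoc, hexp1, mul_one]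
        _ ≤ (W 0 * Real.exp (W 0)) * Real.exp (-(ε*t)) := by
            apply mul_le_mul_of_nonneg_right _ (Real.exp_pos _).le
            rw [← hy0]; exact hyt
        _ ≤ G (3*s₀) * Real.exp (-(ε*t)) :=
            mul_le_mul_of_nonneg_right hG0' (Real.exp_pos _).le
    have hWt : W t ≤ Giso.symm (G (3*s₀) * Real.exp (-(ε*t))) := by
      have h := Giso.symm.monotone hGWt
      rwa [show Giso.symm (G (W t)) = W t by
        rw [← Giso_apply, OrderIso.symm_apply_apply]] at h
    calc ‖(x t, z t)‖ = max |x t| |z t| := by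
          rw [Prod.norm_def]; simp [Real.norm_eq_abs]
      _ ≤ phi (W t) := norm_bound (x t) (z t)
      _ ≤ phi (Giso.symm (G (3*s₀) * Real.exp (-(ε*t)))) := phi_mono hWt
end
end

section
/- The planar system ẋ = 0.004·(2−2z)³, ż = −(z−x−1)³ is globally asymptotically stable at the equilibrium (x,z) = (0,1): there exists β of class KL such that every solution satisfies |(x(t), z(t)−1)| ≤ β(|(x(0), z(0)−1)|, t) for all t ≥ 0. -/
open Set Filter MeasureTheory InnerProductSpace

noncomputable section

-- polynomial facts
lemma f1 (u v : ℝ) : (1/40)*(u^2+v^2)^2 ≤ (4/125)*v^4+(v-u)^4+(1/10)*u^4 := by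
  nlinarith [sq_nonneg (u^2 - (80/43)*u*v + (166/215)*v^2), sq_nonneg (u*v - (1960/2447)*v^2), sq_nonneg (v^2)]

lemma f2 (u v : ℝ) : (4/125)*v^4+(v-u)^4+(1/10)*u^4 ≤ (32/5)*(u^2+v^2)^2 := by
  nlinarith [sq_nonneg (u*v), sq_nonneg (u+v), sq_nonneg (u-v), sq_nonneg (u^2-v^2)]

lemma f3 (u v : ℝ) : (1/1000)*(u^2+v^2)^3 ≤ 4*(v-u)^6 + (8/625)*u^3*v^3 := by
  nlinarith [sq_nonneg (u^3 - (4000/1333)*u^2*v + (11828/3999)*u*v^2 - (3833/3999)*v^3),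
    sq_nonneg (u^2*v - (4450399/2212765)*u*v^2 + (433391/442553)*v^3),
    sq_nonneg (u*v^2 - (301433305/527741134)*v^3), sq_nonneg (v^3)]

lemma norm_sq_bounds (a b : ℝ) : ‖(a,b)‖^2 ≤ a^2+b^2 ∧ a^2+b^2 ≤ 2*‖(a,b)‖^2 := by
  rw [Prod.norm_def, Real.norm_eq_abs, Real.norm_eq_abs]
  rcases le_total |a| |b| with h|h
  · rw [max_eq_right h]
    constructor
    · nlinarith [sq_abs b, sq_nonneg a]
    · nlinarith [sq_abs a, sq_abs b, mul_self_le_mul_self (abs_nonneg a) h]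
  · rw [max_eq_left h]
    constructor
    · nlinarith [sq_abs a, sq_nonneg b]
    · nlinarith [sq_abs a, sq_abs b, mul_self_le_mul_self (abs_nonneg b) h]

-- derivative of the Lyapunov function along solutions
lemma lyap_deriv (x z : ℝ → ℝ)
    (hx : ∀ t ≥ (0:ℝ), HasDerivAt x (0.004 * (2 - 2 * z t) ^ 3) t)
    (hz : ∀ t ≥ (0:ℝ), HasDerivAt z (-(z t - x t - 1) ^ 3) t)
    (τ : ℝ) (hτ : 0 ≤ τ) :
    HasDerivAt (fun σ => (4/125)*(z σ - 1)^4 + (z σ - 1 - x σ)^4 + (1/10)*(x σ)^4)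
      (-(4*(z τ - 1 - x τ)^6 + (8/625)*(x τ)^3*(z τ - 1)^3)) τ := by
  have hu := hx τ hτ
  have hv : HasDerivAt (fun σ => z σ - 1) (-(z τ - x τ - 1)^3) τ := (hz τ hτ).sub_const 1
  have hw : HasDerivAt (fun σ => z σ - 1 - x σ)
      (-(z τ - x τ - 1)^3 - 0.004 * (2 - 2 * z τ) ^ 3) τ := hv.sub hu
  have h1 := (hv.pow 4).const_mul (4/125 : ℝ)
  have h2 := hw.pow 4
  have h3 := (hu.pow 4).const_mul (1/10 : ℝ)
  have h := (h1.add h2).add h3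
  refine h.congr_deriv ?_
  push_cast
  norm_num
  ring


lemma beta_KL_parts : ContinuousOn (Function.uncurry (fun s t : ℝ => 8*s/Real.sqrt (1+s^2*t/3276800))) (Ici 0 ×ˢ Ici 0) ∧
  (∀ t ≥ (0:ℝ), ContinuousOn (fun s : ℝ => 8*s/Real.sqrt (1+s^2*t/3276800)) (Ici 0) ∧
    StrictMonoOn (fun s : ℝ => 8*s/Real.sqrt (1+s^2*t/3276800)) (Ici 0) ∧
    (8*(0:ℝ)/Real.sqrt (1+(0:ℝ)^2*t/3276800) = 0)) ∧
  (∀ s > (0:ℝ), AntitoneOn (fun t : ℝ => 8*s/Real.sqrt (1+s^2*t/3276800)) (Ici 0) ∧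
    Tendsto (fun t : ℝ => 8*s/Real.sqrt (1+s^2*t/3276800)) atTop (nhds 0)) := by
  have hA : ∀ s t : ℝ, 0 ≤ s → 0 ≤ t → (1:ℝ) ≤ 1+s^2*t/3276800 := by
    intro s t hs ht; nlinarith [sq_nonneg s]
  refine ⟨?_, ?_, ?_⟩
  · apply ContinuousOn.div
    · fun_prop
    · fun_prop
    · rintro ⟨s, t⟩ ⟨hs, ht⟩
      have := hA s t hs ht
      positivity
  · intro t ht
    refine ⟨?_, ?_, by simp⟩
    · apply ContinuousOn.div
      · fun_prop
      · fun_prop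
      · intro s hs
        have := hA s t hs ht
        positivity
    · intro s1 hs1 s2 hs2 h12
      simp only
      have hA1 : (0:ℝ) < 1+s1^2*t/3276800 := lt_of_lt_of_le one_pos (hA s1 t hs1 ht)
      have hA2 : (0:ℝ) < 1+s2^2*t/3276800 := lt_of_lt_of_le one_pos (hA s2 t (le_of_lt (lt_of_le_of_lt hs1 h12)) ht)
      rw [div_lt_div_iff₀ (Real.sqrt_pos.mpr hA1) (Real.sqrt_pos.mpr hA2)]
      have key : (8*s1*Real.sqrt (1+s2^2*t/3276800))^2 < (8*s2*Real.sqrt (1+s1^2*t/3276800))^2 := by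
        rw [mul_pow, mul_pow, mul_pow, mul_pow, Real.sq_sqrt hA2.le, Real.sq_sqrt hA1.le]
        have hs1x : (0:ℝ) ≤ s1 := hs1
        have h2 : s1^2 < s2^2 := by nlinarith [hs1x, h12]
        have hc : s1^2*(s2^2*t) ≤ s2^2*(s1^2*t) := by ring_nf; exact le_refl _
        nlinarith [mul_nonneg (mul_nonneg (sq_nonneg s1) (sq_nonneg s2)) ht]
      have hr : 0 ≤ 8*s2*Real.sqrt (1+s1^2*t/3276800) :=
        mul_nonneg (mul_nonneg (by norm_num) (hs1.trans h12.le)) (Real.sqrt_nonneg _)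
      exact lt_of_pow_lt_pow_left₀ 2 hr key
  · intro s hs
    constructor
    · intro t1 ht1 t2 ht2 h12
      simp only
      have hA1 : (0:ℝ) < 1+s^2*t1/3276800 := lt_of_lt_of_le one_pos (hA s t1 hs.le ht1)
      apply div_le_div_of_nonneg_left (by positivity) (Real.sqrt_pos.mpr hA1)
      apply Real.sqrt_le_sqrt
      nlinarith [sq_nonneg s]
    · have h1 : Tendsto (fun t : ℝ => 1+s^2*t/3276800) atTop atTop := by
        apply tendsto_atTop_add_const_left
        apply Tendsto.atTop_div_const (by norm_num)
        exact Tendsto.const_mul_atTop (by positivity) tendsto_id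
      have h2 : Tendsto (fun t : ℝ => Real.sqrt (1+s^2*t/3276800)) atTop atTop := by
        rw [tendsto_atTop]
        intro b
        filter_upwards [h1.eventually_ge_atTop (b^2)] with τ hτ
        calc b ≤ |b| := le_abs_self b
        _ = Real.sqrt (b^2) := (Real.sqrt_sq_eq_abs b).symm
        _ ≤ _ := Real.sqrt_le_sqrt hτ
      have h3 := h2.inv_tendsto_atTop
      have h4 := h3.const_mul (8*s)
      simp only [mul_zero] at h4
      refine h4.congr (fun t => ?_)
      simp [div_eq_mul_inv]

set_option maxHeartbeats 1000000 in
lemma decay (x z : ℝ → ℝ)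
    (hx : ∀ t ≥ (0:ℝ), HasDerivAt x (0.004 * (2 - 2 * z t) ^ 3) t)
    (hz : ∀ t ≥ (0:ℝ), HasDerivAt z (-(z t - x t - 1) ^ 3) t)
    (t : ℝ) (ht : 0 ≤ t) :
    ‖(x t, z t - 1)‖ ≤ 8*‖(x 0, z 0 - 1)‖/Real.sqrt (1+‖(x 0, z 0 - 1)‖^2*t/3276800) := by
  set g : ℝ → ℝ := fun τ => (4/125)*(z τ - 1)^4 + (z τ - 1 - x τ)^4 + (1/10)*(x τ)^4 with hgdef
  set Dg : ℝ → ℝ := fun τ => -(4*(z τ - 1 - x τ)^6 + (8/625)*(x τ)^3*(z τ - 1)^3) with hDgdef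
  set r2 : ℝ → ℝ := fun τ => (x τ)^2 + (z τ - 1)^2 with hr2def
  set s0 : ℝ := ‖(x 0, z 0 - 1)‖ with hs0def
  set A : ℝ := 1 + s0^2*t/3276800 with hAdef
  have hg : ∀ τ, 0 ≤ τ → HasDerivAt g (Dg τ) τ := fun τ hτ => lyap_deriv x z hx hz τ hτ
  have hr2nn : ∀ τ, 0 ≤ r2 τ := fun τ => by rw [hr2def]; positivity
  have hgl : ∀ τ, (1/40)*(r2 τ)^2 ≤ g τ := fun τ => f1 (x τ) (z τ - 1)
  have hgu : ∀ τ, g τ ≤ (32/5)*(r2 τ)^2 := fun τ => f2 (x τ) (z τ - 1)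
  have hDle : ∀ τ, Dg τ ≤ -((1/1000)*(r2 τ)^3) := by
    intro τ
    have h := f3 (x τ) (z τ - 1)
    rw [hDgdef, hr2def]
    simp only
    linarith
  have hgnn : ∀ τ, 0 ≤ g τ := fun τ => le_trans (by positivity) (hgl τ)
  have hnorm1 : ∀ τ, ‖(x τ, z τ - 1)‖^2 ≤ r2 τ := fun τ => (norm_sq_bounds (x τ) (z τ - 1)).1
  have hnorm2 : ∀ τ, r2 τ ≤ 2*‖(x τ, z τ - 1)‖^2 := fun τ => (norm_sq_bounds (x τ) (z τ - 1)).2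
  have hs0nn : 0 ≤ s0 := norm_nonneg _
  have hA1 : (1:ℝ) ≤ A := by rw [hAdef]; nlinarith [sq_nonneg s0]
  clear hgdef hDgdef hr2def
  clear_value g Dg r2
  have hsA : 0 < Real.sqrt A := Real.sqrt_pos.mpr (lt_of_lt_of_le one_pos hA1)
  -- antitone
  have hanti : AntitoneOn g (Icc 0 t) := by
    apply antitoneOn_of_deriv_nonpos (convex_Icc 0 t)
    · intro τ hτ
      exact (hg τ hτ.1).continuousAt.continuousWithinAt
    · intro τ hτ
      rw [interior_Icc] at hτ
      exact (hg τ hτ.1.le).differentiableAt.differentiableWithinAt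
    · intro τ hτ
      rw [interior_Icc] at hτ
      rw [(hg τ hτ.1.le).deriv]
      have h1 := hDle τ
      have h2 : 0 ≤ (r2 τ)^3 := pow_nonneg (hr2nn τ) 3
      linarith
  by_cases hpos : 0 < g t
  case neg =>
    have hgt0 : g t = 0 := le_antisymm (not_lt.mp hpos) (hgnn t)
    have h2 : (r2 t)^2 ≤ 0 := by linarith [hgl t]
    have h4 : r2 t = 0 := by nlinarith [hr2nn t]
    have h5 : ‖(x t, z t - 1)‖ = 0 := by
      nlinarith [norm_nonneg (x t, z t - 1), hnorm1 t]
    rw [h5]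
    exact div_nonneg (mul_nonneg (by norm_num) hs0nn) (Real.sqrt_nonneg _)
  case pos =>
    have hmemt : t ∈ Icc (0:ℝ) t := ⟨ht, le_refl t⟩
    have hgpos : ∀ τ ∈ Icc (0:ℝ) t, 0 < g τ := fun τ hτ =>
      lt_of_lt_of_le hpos (hanti hτ hmemt hτ.2)
    set c' : ℝ := (1/1000)/((128/5)*Real.sqrt (128/5)) with hc'def
    have hs5 : (0:ℝ) < Real.sqrt (128/5) := Real.sqrt_pos.mpr (by norm_num)
    have hc' : 0 < c' := by rw [hc'def]; positivity
    -- derivative of ψ = (sqrt g)⁻¹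
    have hψ : ∀ τ ∈ Icc (0:ℝ) t, HasDerivAt (fun σ => (Real.sqrt (g σ))⁻¹)
        (-(Dg τ/(2*Real.sqrt (g τ)))/(Real.sqrt (g τ))^2) τ := by
      intro τ hτ
      have h1 := (hg τ hτ.1).sqrt (ne_of_gt (hgpos τ hτ))
      exact h1.inv (Real.sqrt_ne_zero'.mpr (hgpos τ hτ))
    have hψ' : ∀ τ ∈ Icc (0:ℝ) t, c'/2 ≤ -(Dg τ/(2*Real.sqrt (g τ)))/(Real.sqrt (g τ))^2 := by
      intro τ hτ
      have hG := hgpos τ hτ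
      have hsq : Real.sqrt (g τ)^2 = g τ := Real.sq_sqrt hG.le
      have hsqpos : 0 < Real.sqrt (g τ) := Real.sqrt_pos.mpr hG
      have hgu' : g τ ≤ (128/5)*(r2 τ)^2 := by nlinarith [hgu τ, hr2nn τ]
      have hsqle : Real.sqrt (g τ) ≤ Real.sqrt (128/5) * r2 τ := by
        calc Real.sqrt (g τ) ≤ Real.sqrt ((128/5)*(r2 τ)^2) := Real.sqrt_le_sqrt hgu'
        _ = Real.sqrt (128/5) * Real.sqrt ((r2 τ)^2) := Real.sqrt_mul (by norm_num) _
        _ = Real.sqrt (128/5) * r2 τ := by rw [Real.sqrt_sq (hr2nn τ)]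
      have h5 : Real.sqrt (g τ) * g τ ≤ (Real.sqrt (128/5) * r2 τ) * ((128/5)*(r2 τ)^2) :=
        mul_le_mul hsqle hgu' hG.le (mul_nonneg (Real.sqrt_nonneg _) (hr2nn τ))
      have h6 : c' * ((Real.sqrt (128/5) * r2 τ) * ((128/5)*(r2 τ)^2)) = (1/1000)*(r2 τ)^3 := by
        rw [hc'def]
        field_simp
      have key : c' * (Real.sqrt (g τ) * g τ) ≤ -(Dg τ) := by
        have h7 := mul_le_mul_of_nonneg_left h5 hc'.le
        rw [h6] at h7
        linarith [hDle τ]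
      have e : -(Dg τ/(2*Real.sqrt (g τ)))/(Real.sqrt (g τ))^2
          = (-(Dg τ)) / (2*(Real.sqrt (g τ) * g τ)) := by
        rw [← neg_div, div_div]
        congr 1
        rw [hsq]
        ring
      rw [e, le_div_iff₀ (by positivity)]
      nlinarith [key]
    -- monotonicity of F = ψ - (c'/2) τ
    have hcomp : (Real.sqrt (g 0))⁻¹ + c'/2*t ≤ (Real.sqrt (g t))⁻¹ := by
      have hF : ∀ τ ∈ Icc (0:ℝ) t, HasDerivAt (fun σ => (Real.sqrt (g σ))⁻¹ - c'/2*σ)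
          (-(Dg τ/(2*Real.sqrt (g τ)))/(Real.sqrt (g τ))^2 - c'/2) τ := by
        intro τ hτ
        have hlin : HasDerivAt (fun σ : ℝ => c'/2*σ) (c'/2) τ := by
          simpa using (hasDerivAt_id τ).const_mul (c'/2)
        exact (hψ τ hτ).sub hlin
      have hmono : MonotoneOn (fun σ => (Real.sqrt (g σ))⁻¹ - c'/2*σ) (Icc 0 t) := by
        apply monotoneOn_of_deriv_nonneg (convex_Icc 0 t)
        · intro τ hτ
          exact (hF τ hτ).continuousAt.continuousWithinAt
        · intro τ hτ
          rw [interior_Icc] at hτ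
          exact (hF τ ⟨hτ.1.le, hτ.2.le⟩).differentiableAt.differentiableWithinAt
        · intro τ hτ
          rw [interior_Icc] at hτ
          rw [(hF τ ⟨hτ.1.le, hτ.2.le⟩).deriv]
          linarith [hψ' τ ⟨hτ.1.le, hτ.2.le⟩]
      have h0 := hmono ⟨le_refl 0, ht⟩ hmemt ht
      dsimp only at h0
      linarith
    set st : ℝ := Real.sqrt (g t) with hstdef
    set sZ : ℝ := Real.sqrt (g 0) with hsZdef
    have hstpos : 0 < st := Real.sqrt_pos.mpr hpos
    have hsZpos : 0 < sZ := Real.sqrt_pos.mpr (hgpos 0 ⟨le_refl 0, ht⟩)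
    -- st*(1 + (c'/2)*sZ*t) ≤ sZ
    have hkey1 : st*(1 + c'/2*sZ*t) ≤ sZ := by
      have h1 := mul_le_mul_of_nonneg_left hcomp (by positivity : (0:ℝ) ≤ st*sZ)
      have e1 : st*sZ*(sZ⁻¹ + c'/2*t) = st + c'/2*st*sZ*t := by
        field_simp
      have e2 : st*sZ*st⁻¹ = sZ := by
        field_simp
      rw [e1, e2] at h1
      calc st*(1 + c'/2*sZ*t) = st + c'/2*st*sZ*t := by ring
      _ ≤ sZ := h1
    -- bounds on sZ
    have hg0up : g 0 ≤ (128/5)*s0^4 := by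
      have h1 : r2 0 ≤ 2*s0^2 := by rw [hs0def]; exact hnorm2 0
      have h2 : (r2 0)^2 ≤ 4*s0^4 := by nlinarith [hr2nn 0]
      nlinarith [hgu 0]
    have hg0low : (1/160)*s0^4 ≤ g 0 := by
      have h1 : s0^2 ≤ r2 0 := by rw [hs0def]; exact hnorm1 0
      have h2 : s0^4 ≤ (r2 0)^2 := by nlinarith [sq_nonneg s0]
      nlinarith [hgl 0]
    have hsZup : sZ ≤ Real.sqrt (128/5) * s0^2 := by
      rw [hsZdef]
      calc Real.sqrt (g 0) ≤ Real.sqrt ((128/5)*s0^4) := Real.sqrt_le_sqrt hg0up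
      _ = Real.sqrt (128/5) * Real.sqrt (s0^4) := Real.sqrt_mul (by norm_num) _
      _ = Real.sqrt (128/5) * s0^2 := by
          rw [show s0^4 = (s0^2)^2 by ring, Real.sqrt_sq (sq_nonneg s0)]
    have hsZlow : Real.sqrt (1/160) * s0^2 ≤ sZ := by
      rw [hsZdef]
      calc Real.sqrt (1/160) * s0^2 = Real.sqrt ((1/160)*s0^4) := by
            rw [Real.sqrt_mul (by norm_num), show s0^4 = (s0^2)^2 by ring,
              Real.sqrt_sq (sq_nonneg s0)]
      _ ≤ Real.sqrt (g 0) := Real.sqrt_le_sqrt hg0low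
    -- bound on the norm at time t
    set nt : ℝ := ‖(x t, z t - 1)‖ with hntdef
    have hntnn : 0 ≤ nt := norm_nonneg _
    have hntle : nt^2 ≤ Real.sqrt 160 * st := by
      have h0 : nt^2 ≤ r2 t := hnorm1 t
      have h1 : nt^4 ≤ 160 * g t := by nlinarith [hgl t, hr2nn t, sq_nonneg nt]
      rw [hstdef]
      calc nt^2 = Real.sqrt ((nt^2)^2) := (Real.sqrt_sq (sq_nonneg nt)).symm
      _ = Real.sqrt (nt^4) := by ring_nf
      _ ≤ Real.sqrt (160 * g t) := Real.sqrt_le_sqrt h1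
      _ = Real.sqrt 160 * Real.sqrt (g t) := Real.sqrt_mul (by norm_num) _
    -- key constants
    have E2 : Real.sqrt 160 * Real.sqrt (128/5) = 64 := by
      rw [← Real.sqrt_mul (by norm_num : (0:ℝ) ≤ 160)]
      rw [show (160:ℝ)*(128/5) = 4096 by norm_num, show (4096:ℝ) = 64^2 by norm_num,
        Real.sqrt_sq (by norm_num)]
    have hs160 : (0:ℝ) < Real.sqrt 160 := Real.sqrt_pos.mpr (by norm_num)
    have E1 : c' * Real.sqrt (1/160) / 2 = 1/3276800 := by
      have h160 : Real.sqrt ((1:ℝ)/160) = (Real.sqrt 160)⁻¹ := by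
        rw [one_div, Real.sqrt_inv]
      have hainv : (Real.sqrt 160)⁻¹ = Real.sqrt (128/5)/64 :=
        inv_eq_of_mul_eq_one_left (by
          rw [div_mul_eq_mul_div, mul_comm (Real.sqrt (128/5)), E2]; norm_num)
      rw [hc'def, h160, hainv]
      generalize hb : Real.sqrt (128/5) = b at hs5 ⊢
      field_simp
      ring
    -- combine
    have hAle : A ≤ 1 + c'/2*sZ*t := by
      have h1 : (1/3276800)*s0^2 ≤ c'/2*sZ := by
        have h2 := mul_le_mul_of_nonneg_left hsZlow (by positivity : (0:ℝ) ≤ c'/2)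
        calc (1/3276800)*s0^2 = (c' * Real.sqrt (1/160)/2)*s0^2 := by rw [E1]
        _ = c'/2*(Real.sqrt (1/160)*s0^2) := by ring
        _ ≤ c'/2*sZ := h2
      have h3 := mul_le_mul_of_nonneg_right h1 ht
      rw [hAdef]
      linarith [h3]
    have hstA : st * A ≤ Real.sqrt (128/5) * s0^2 := by
      calc st * A ≤ st * (1 + c'/2*sZ*t) := mul_le_mul_of_nonneg_left hAle hstpos.le
      _ ≤ sZ := hkey1
      _ ≤ Real.sqrt (128/5) * s0^2 := hsZup
    have hfin : nt^2 * A ≤ 64 * s0^2 := by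
      calc nt^2 * A ≤ (Real.sqrt 160 * st) * A :=
            mul_le_mul_of_nonneg_right hntle (le_trans one_pos.le hA1)
      _ = Real.sqrt 160 * (st * A) := by ring
      _ ≤ Real.sqrt 160 * (Real.sqrt (128/5) * s0^2) :=
            mul_le_mul_of_nonneg_left hstA hs160.le
      _ = (Real.sqrt 160 * Real.sqrt (128/5)) * s0^2 := by ring
      _ = 64 * s0^2 := by rw [E2]
    -- conclude
    rw [le_div_iff₀ hsA]
    have h1 : (nt * Real.sqrt A)^2 ≤ (8*s0)^2 := by
      rw [mul_pow, Real.sq_sqrt (le_trans one_pos.le hA1)]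
      nlinarith [hfin]
    calc nt * Real.sqrt A = Real.sqrt ((nt * Real.sqrt A)^2) :=
          (Real.sqrt_sq (by positivity)).symm
    _ ≤ Real.sqrt ((8*s0)^2) := Real.sqrt_le_sqrt h1
    _ = 8*s0 := Real.sqrt_sq (by positivity)

/-- **Example 2**: the feedback optimization closed loop
`ẋ = 0.004·(2−2z)³`, `ż = −(z−x−1)³` is globally asymptotically stable at the
equilibrium `(x,z) = (0,1)`. -/
theorem stmt_13 :
    ∃ β : ℝ → ℝ → ℝ, ClassKL β ∧
      ∀ x z : ℝ → ℝ,
        (∀ t ≥ 0, HasDerivAt x (0.004 * (2 - 2 * z t) ^ 3) t) →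
        (∀ t ≥ 0, HasDerivAt z (-(z t - x t - 1) ^ 3) t) →
        ∀ t ≥ 0, ‖(x t, z t - 1)‖ ≤ β ‖(x 0, z 0 - 1)‖ t := by
  refine ⟨fun s t => 8*s/Real.sqrt (1+s^2*t/3276800), ?_, ?_⟩
  · obtain ⟨h1, h2, h3⟩ := beta_KL_parts
    exact ⟨h1, fun t ht => ⟨(h2 t ht).1, (h2 t ht).2.1, (h2 t ht).2.2⟩, h3⟩
  · intro x z hx hz t ht
    exact decay x z hx hz t ht
end
end

section
/- Let M be a real p×q matrix with full column rank (rank M = q) and let μ > 0. Then the (p+q)×(p+q) real block matrix A = [[−I_p, −M], [μMᵀ, 0]] is Hurwitz: every eigenvalue λ ∈ ℂ of A satisfies Re λ < 0. -/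
open Set Filter MeasureTheory InnerProductSpace

noncomputable section

section Aux
open Matrix Complex

private theorem stmt_14_aux {p q : ℕ} (M : Matrix (Fin p) (Fin q) ℝ) (hM : M.rank = q)
    (μ : ℝ) (hμ : 0 < μ) :
    ∀ lam : ℂ, ((Matrix.fromBlocks (-1 : Matrix (Fin p) (Fin p) ℝ) (-M) (μ • M.transpose)
          (0 : Matrix (Fin q) (Fin q) ℝ)).map (fun r : ℝ => (r : ℂ))
        - lam • (1 : Matrix (Fin p ⊕ Fin q) (Fin p ⊕ Fin q) ℂ)).det = 0 → lam.re < 0 := by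
  intro lam hdet
  have hinj : ∀ z : Fin q → ℝ, M *ᵥ z = 0 → z = 0 := by
    intro z hz
    have hker : LinearMap.ker M.mulVecLin = ⊥ := by
      have h1 := LinearMap.finrank_range_add_finrank_ker M.mulVecLin
      have h2 : Module.finrank ℝ (Fin q → ℝ) = q := by simp
      rw [h2] at h1
      have h3 : M.rank = Module.finrank ℝ (LinearMap.range M.mulVecLin) := rfl
      have : Module.finrank ℝ (LinearMap.ker M.mulVecLin) = 0 := by omega
      exact Submodule.finrank_eq_zero.mp this
    exact LinearMap.ker_eq_bot.mp hker (by simpa using hz)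
  set M' : Matrix (Fin p) (Fin q) ℂ := M.map (fun r : ℝ => (r : ℂ)) with hM'
  have hinjC : ∀ z : Fin q → ℂ, M' *ᵥ z = 0 → z = 0 := by
    intro z hz
    have hre : M *ᵥ (fun j => (z j).re) = 0 := by
      funext i
      have h := congrArg Complex.re (congrFun hz i)
      simpa [Matrix.mulVec, dotProduct, hM', Complex.re_sum, Complex.mul_re] using h
    have him : M *ᵥ (fun j => (z j).im) = 0 := by
      funext i
      have h := congrArg Complex.im (congrFun hz i)
      simpa [Matrix.mulVec, dotProduct, hM', Complex.im_sum, Complex.mul_im] using h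
    have h1 := hinj _ hre
    have h2 := hinj _ him
    funext j
    have e1 := congrFun h1 j
    have e2 := congrFun h2 j
    apply Complex.ext <;> simpa using (by assumption : _)
  obtain ⟨v, hv0, hv⟩ := Matrix.exists_mulVec_eq_zero_iff.mpr hdet
  set x : Fin p → ℂ := v ∘ Sum.inl with hx
  set y : Fin q → ℂ := v ∘ Sum.inr with hy
  have hA : (Matrix.fromBlocks (-1 : Matrix (Fin p) (Fin p) ℝ) (-M) (μ • M.transpose)
        (0 : Matrix (Fin q) (Fin q) ℝ)).map (fun r : ℝ => (r : ℂ))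
      = Matrix.fromBlocks (-1) (-M') ((μ : ℂ) • M'ᵀ) 0 := by
    ext (i|i) (j|j) <;> simp [hM', Matrix.one_apply, apply_ite]
  rw [hA] at hv
  have hv' : (Matrix.fromBlocks (-1) (-M') ((μ : ℂ) • M'ᵀ) 0) *ᵥ v = lam • v := by
    rw [Matrix.sub_mulVec, Matrix.smul_mulVec, Matrix.one_mulVec, sub_eq_zero] at hv
    exact hv
  rw [Matrix.fromBlocks_mulVec] at hv'
  have eq1 : -x + -(M' *ᵥ y) = lam • x := by
    funext i
    have := congrFun hv' (Sum.inl i)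
    simpa [Matrix.neg_mulVec, hx, hy] using this
  have eq2 : (μ : ℂ) • (M'ᵀ *ᵥ x) = lam • y := by
    funext j
    have := congrFun hv' (Sum.inr j)
    simpa [Matrix.smul_mulVec, hx, hy] using this
  set a : ℝ := ∑ i, Complex.normSq (x i) with ha
  set b : ℝ := ∑ j, Complex.normSq (y j) with hb
  have ha0 : 0 ≤ a := Finset.sum_nonneg fun i _ => Complex.normSq_nonneg _
  have hb0 : 0 ≤ b := Finset.sum_nonneg fun i _ => Complex.normSq_nonneg _
  have hxx : dotProduct (star x) x = (a : ℂ) := by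
    simp [dotProduct, ha, Complex.normSq_eq_conj_mul_self, Pi.star_apply]
  have hyy : dotProduct (star y) y = (b : ℂ) := by
    simp [dotProduct, hb, Complex.normSq_eq_conj_mul_self, Pi.star_apply]
  set c : ℂ := dotProduct (star x) (M' *ᵥ y) with hc
  have hconj : dotProduct (star y) (M'ᵀ *ᵥ x) = (starRingEnd ℂ) c := by
    simp only [hc, dotProduct, Matrix.mulVec, map_sum, Finset.mul_sum, _root_.map_mul,
      Pi.star_apply, RingHom.id_apply, Complex.conj_conj, Matrix.transpose_apply, hM',
      Matrix.map_apply, Complex.conj_ofReal]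
    rw [Finset.sum_comm]
    exact Finset.sum_congr rfl fun j _ => Finset.sum_congr rfl fun i _ => by
      simp only [Complex.star_def, Complex.conj_conj]; ring
  have h1 : -(a : ℂ) - c = lam * a := by
    have := congrArg (fun w => dotProduct (star x) w) eq1
    simpa [dotProduct_add, dotProduct_neg, dotProduct_smul, hxx, hc,
      smul_eq_mul, sub_eq_add_neg] using this
  have h2 : (μ : ℂ) * ((starRingEnd ℂ) c) = lam * b := by
    have := congrArg (fun w => dotProduct (star y) w) eq2
    simpa [dotProduct_smul, hyy, hconj, smul_eq_mul] using this
  have h2' : (μ : ℂ) * c = (starRingEnd ℂ) lam * b := by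
    have := congrArg (starRingEnd ℂ) h2
    simpa [_root_.map_mul, Complex.conj_ofReal] using this
  have hcc : c = -(a:ℂ) - lam * a := by linear_combination -h1
  rw [hcc] at h2'
  have E := congrArg Complex.re h2'
  simp only [Complex.mul_re, Complex.sub_re, Complex.sub_im, Complex.neg_re, Complex.neg_im,
    Complex.ofReal_re, Complex.ofReal_im, Complex.mul_im, Complex.conj_re, Complex.conj_im] at E
  -- E : μ * (-a - lam.re * a) ... = lam.re * b ...
  by_cases hA0 : a = 0
  · -- then x = 0, so y = 0, contradiction with v ≠ 0
    have hx0 : x = 0 := by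
      funext i
      have hsum : ∑ i, Complex.normSq (x i) = 0 := hA0
      have : Complex.normSq (x i) = 0 :=
        (Finset.sum_eq_zero_iff_of_nonneg (fun i _ => Complex.normSq_nonneg (x i))).mp hsum i
          (Finset.mem_univ i)
      exact Complex.normSq_eq_zero.mp this
    have hy0 : y = 0 := by
      apply hinjC
      have := eq1
      rw [hx0] at this
      simpa using this.symm
    apply absurd hv0
    simp only [ne_eq, not_not]
    funext k
    cases k with
    | inl i => exact congrFun hx0 i
    | inr j => exact congrFun hy0 j
  · have hapos : 0 < a := lt_of_le_of_ne ha0 (Ne.symm hA0)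
    nlinarith [E, mul_pos hμ hapos, mul_nonneg hb0 (le_of_lt hμ)]

end Aux

/-- If `M` is a real `p×q` matrix with full column rank and `μ > 0`, then the block
matrix `A = [[−I_p, −M], [μMᵀ, 0]]` is Hurwitz: every complex eigenvalue of `A` has
negative real part. -/
theorem stmt_14 {p q : ℕ} (M : Matrix (Fin p) (Fin q) ℝ) (hM : M.rank = q)
    (μ : ℝ) (hμ : 0 < μ) :
    ∀ lam : ℂ, ((Matrix.fromBlocks (-1 : Matrix (Fin p) (Fin p) ℝ) (-M) (μ • M.transpose)
          (0 : Matrix (Fin q) (Fin q) ℝ)).map (fun r : ℝ => (r : ℂ))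
        - lam • (1 : Matrix (Fin p ⊕ Fin q) (Fin p ⊕ Fin q) ℂ)).det = 0 → lam.re < 0 := by
  exact stmt_14_aux M hM μ hμ
end
end

section
/- Let h : ℝⁿ → ℝ be continuously differentiable with ∇h(0) = 0, and suppose there exist constants ω > 0 and ϑ > 0 such that (p₁−p₂)ᵀ(∇h(p₁)−∇h(p₂)) ≥ ω|p₁−p₂|² and |∇h(p₁)−∇h(p₂)| ≤ ϑ|p₁−p₂| for all p₁, p₂ ∈ ℝⁿ. Let σ : ℝⁿ → ℝⁿ be the unit saturation σ(v) = v·min{1, 1/|v|} for v ≠ 0 and σ(0) = 0, and fix θ ∈ (0,1). Then for all p ∈ ℝⁿ and all Δ ∈ ℝⁿ with |Δ| ≤ (1−θ)ω|p|, it holds that pᵀσ(∇h(p)+Δ) ≥ min{ θω|p|², θω|p|/(ϑ+(1−θ)ω) }. -/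
open Set Filter MeasureTheory InnerProductSpace

noncomputable section

/-- A key estimate in the source-seeking analysis: for a strongly convex objective
with Lipschitz gradient and the unit saturation `σ`, the saturated perturbed
gradient field satisfies
`pᵀσ(∇h(p)+Δ) ≥ min{θω|p|², θω|p|/(ϑ+(1−θ)ω)}` whenever `|Δ| ≤ (1−θ)ω|p|`. -/
theorem stmt_15
    {n : ℕ}
    (h : EuclideanSpace ℝ (Fin n) → ℝ) (hh : ContDiff ℝ 1 h)
    (hgrad0 : gradient h 0 = 0)
    (ω ϑ : ℝ) (hω : 0 < ω) (hϑ : 0 < ϑ)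
    (hconv : ∀ p₁ p₂ : EuclideanSpace ℝ (Fin n),
      ω * ‖p₁ - p₂‖ ^ 2 ≤ ⟪p₁ - p₂, gradient h p₁ - gradient h p₂⟫_ℝ)
    (hlip : ∀ p₁ p₂ : EuclideanSpace ℝ (Fin n),
      ‖gradient h p₁ - gradient h p₂‖ ≤ ϑ * ‖p₁ - p₂‖)
    (σ : EuclideanSpace ℝ (Fin n) → EuclideanSpace ℝ (Fin n))
    (hσ : ∀ v, σ v = min 1 ‖v‖⁻¹ • v)
    (θ : ℝ) (hθ : 0 < θ) (hθ' : θ < 1) :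
    ∀ (p Δ : EuclideanSpace ℝ (Fin n)), ‖Δ‖ ≤ (1 - θ) * ω * ‖p‖ →
      min (θ * ω * ‖p‖ ^ 2) (θ * ω * ‖p‖ / (ϑ + (1 - θ) * ω))
        ≤ ⟪p, σ (gradient h p + Δ)⟫_ℝ := by
  intro p Δ hΔ
  set v := gradient h p + Δ with hv
  have hpg : ω * ‖p‖ ^ 2 ≤ ⟪p, gradient h p⟫_ℝ := by
    have := hconv p 0
    simpa [hgrad0] using this
  have hg : ‖gradient h p‖ ≤ ϑ * ‖p‖ := by
    have := hlip p 0
    simpa [hgrad0] using this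
  have hpΔ : -((1 - θ) * ω * ‖p‖ ^ 2) ≤ ⟪p, Δ⟫_ℝ := by
    have h1 : |⟪p, Δ⟫_ℝ| ≤ ‖p‖ * ‖Δ‖ := abs_real_inner_le_norm p Δ
    have h2 : ‖p‖ * ‖Δ‖ ≤ ‖p‖ * ((1 - θ) * ω * ‖p‖) :=
      mul_le_mul_of_nonneg_left hΔ (norm_nonneg p)
    have := (abs_le.mp h1).1
    nlinarith [norm_nonneg p]
  have hpv : θ * ω * ‖p‖ ^ 2 ≤ ⟪p, v⟫_ℝ := by
    rw [hv, inner_add_right]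
    nlinarith
  have hvn : ‖v‖ ≤ (ϑ + (1 - θ) * ω) * ‖p‖ := by
    calc ‖v‖ ≤ ‖gradient h p‖ + ‖Δ‖ := norm_add_le _ _
      _ ≤ ϑ * ‖p‖ + (1 - θ) * ω * ‖p‖ := add_le_add hg hΔ
      _ = (ϑ + (1 - θ) * ω) * ‖p‖ := by ring
  rw [hσ v, real_inner_smul_right]
  rcases eq_or_ne p 0 with hp | hp
  · simp [hp]
  · have hpn : 0 < ‖p‖ := norm_pos_iff.mpr hp
    have hpv0 : 0 < ⟪p, v⟫_ℝ := lt_of_lt_of_le (by positivity) hpv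
    have hD : 0 < ϑ + (1 - θ) * ω := by nlinarith
    rcases le_or_gt ‖v‖ 1 with hv1 | hv1
    · have hvne : v ≠ 0 := by
        intro h0
        rw [h0] at hpv0
        simp at hpv0
      have hvp : 0 < ‖v‖ := norm_pos_iff.mpr hvne
      have : min 1 ‖v‖⁻¹ = 1 := min_eq_left (one_le_inv_iff₀.mpr ⟨hvp, hv1⟩)
      rw [this, one_mul]
      exact le_trans (min_le_left _ _) hpv
    · have hvp : (0:ℝ) < ‖v‖ := lt_trans one_pos hv1
      have : min 1 ‖v‖⁻¹ = ‖v‖⁻¹ := min_eq_right (by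
        rw [inv_le_one_iff₀]; right; exact hv1.le)
      rw [this]
      refine le_trans (min_le_right _ _) ?_
      rw [div_le_iff₀ hD]
      have h1 : θ * ω * ‖p‖ ^ 2 * ‖v‖⁻¹ ≤ ⟪p, v⟫_ℝ * ‖v‖⁻¹ :=
        mul_le_mul_of_nonneg_right hpv (by positivity)
      have h2 : θ * ω * ‖p‖ ≤ θ * ω * ‖p‖ ^ 2 * ‖v‖⁻¹ * (ϑ + (1 - θ) * ω) := by
        rw [show θ * ω * ‖p‖ ^ 2 * ‖v‖⁻¹ * (ϑ + (1 - θ) * ω)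
            = θ * ω * ‖p‖ ^ 2 * (ϑ + (1 - θ) * ω) / ‖v‖ by ring,
          le_div_iff₀ hvp]
        nlinarith [mul_le_mul_of_nonneg_left hvn
          (by positivity : (0:ℝ) ≤ θ * ω * ‖p‖)]
      calc θ * ω * ‖p‖ ≤ θ * ω * ‖p‖ ^ 2 * ‖v‖⁻¹ * (ϑ + (1 - θ) * ω) := h2
        _ ≤ ⟪p, v⟫_ℝ * ‖v‖⁻¹ * (ϑ + (1 - θ) * ω) :=
            mul_le_mul_of_nonneg_right h1 hD.le
        _ = ‖v‖⁻¹ * ⟪p, v⟫_ℝ * (ϑ + (1 - θ) * ω) := by ring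
end
end

section
/- Let h : ℝⁿ → ℝ be continuously differentiable with |∇h(ξ₁)−∇h(ξ₂)| ≤ ϑ|ξ₁−ξ₂| for all ξ₁, ξ₂ ∈ ℝⁿ, and let d₁, …, d_N ∈ ℝⁿ satisfy Σ_{i=1}^N d_i = 0. Then for every p ∈ ℝⁿ, | Σ_{i=1}^N d_i·h(p+d_i) − (Σ_{i=1}^N d_i d_iᵀ)·∇h(p) | ≤ ϑ·Σ_{i=1}^N |d_i|³. -/
open Set Filter MeasureTheory InnerProductSpace

noncomputable section

lemma stmt_16_aux
    {n : ℕ}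
    (h : EuclideanSpace ℝ (Fin n) → ℝ) (hh : ContDiff ℝ 1 h)
    (ϑ : ℝ)
    (hlip : ∀ ξ₁ ξ₂ : EuclideanSpace ℝ (Fin n),
      ‖gradient h ξ₁ - gradient h ξ₂‖ ≤ ϑ * ‖ξ₁ - ξ₂‖)
    (x v : EuclideanSpace ℝ (Fin n)) :
    |h (x + v) - h x - ⟪gradient h x, v⟫_ℝ| ≤ ϑ * ‖v‖ ^ 2 := by
  by_cases hv : v = 0
  · simp [hv]
  have hdiff : Differentiable ℝ h := hh.differentiable one_ne_zero
  have hgrad : ∀ z : EuclideanSpace ℝ (Fin n),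
      fderiv ℝ h z = InnerProductSpace.toDual ℝ _ (gradient h z) := by
    intro z
    simp [gradient]
  have key := (convex_segment x (x + v)).norm_image_sub_le_of_norm_hasFDerivWithin_le'
    (f := h) (f' := fun z => fderiv ℝ h z) (φ := fderiv ℝ h x) (C := ϑ * ‖v‖)
    (fun z _ => (hdiff z).hasFDerivAt.hasFDerivWithinAt)
    (fun z hz => by
      obtain ⟨a, b, ha, hb, hab, rfl⟩ := hz
      have hz' : a • x + b • (x + v) - x = b • v := by
        rw [smul_add, ← add_assoc, ← add_smul, hab, one_smul]
        abel
      have h1 : ‖fderiv ℝ h (a • x + b • (x + v)) - fderiv ℝ h x‖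
          = ‖gradient h (a • x + b • (x + v)) - gradient h x‖ := by
        rw [hgrad, hgrad, ← map_sub]
        exact (InnerProductSpace.toDual ℝ _).norm_map _
      rw [h1]
      refine (hlip _ _).trans ?_
      rw [hz', norm_smul, Real.norm_eq_abs, abs_of_nonneg hb]
      have hϑ : 0 ≤ ϑ := by
        have := hlip (x + v) x
        have hpos : 0 < ‖x + v - x‖ := by
          simp [hv]
        nlinarith [norm_nonneg (gradient h (x + v) - gradient h x)]
      have hb1 : b ≤ 1 := by linarith
      nlinarith [mul_nonneg (mul_nonneg hϑ (norm_nonneg v)) (sub_nonneg.2 hb1)])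
    (left_mem_segment ℝ x (x + v)) (right_mem_segment ℝ x (x + v))
  have h2 : fderiv ℝ h x (x + v - x) = ⟪gradient h x, v⟫_ℝ := by
    rw [hgrad, add_sub_cancel_left]
    rfl
  rw [h2, add_sub_cancel_left] at key
  calc |h (x + v) - h x - ⟪gradient h x, v⟫_ℝ| ≤ ϑ * ‖v‖ * ‖v‖ := key
    _ = ϑ * ‖v‖ ^ 2 := by ring

/-- Accuracy of the mean-value-based gradient estimate: if `∇h` is `ϑ`-Lipschitz and
the offsets `d_i` sum to zero, then
`|Σ_i d_i h(p+d_i) − (Σ_i d_i d_iᵀ)∇h(p)| ≤ ϑ Σ_i |d_i|³`.  Here the matrix-vector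
product `(Σ_i d_i d_iᵀ)·∇h(p)` is written as `Σ_i ⟪d_i, ∇h(p)⟫·d_i`. -/
theorem stmt_16
    {n N : ℕ}
    (h : EuclideanSpace ℝ (Fin n) → ℝ) (hh : ContDiff ℝ 1 h)
    (ϑ : ℝ)
    (hlip : ∀ ξ₁ ξ₂ : EuclideanSpace ℝ (Fin n),
      ‖gradient h ξ₁ - gradient h ξ₂‖ ≤ ϑ * ‖ξ₁ - ξ₂‖)
    (d : Fin N → EuclideanSpace ℝ (Fin n)) (hd : ∑ i, d i = 0) :
    ∀ p : EuclideanSpace ℝ (Fin n),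
      ‖(∑ i, h (p + d i) • d i) - ∑ i, ⟪d i, gradient h p⟫_ℝ • d i‖
        ≤ ϑ * ∑ i, ‖d i‖ ^ 3 := by
  intro p
  have hzero : ∑ i, h p • d i = (0 : EuclideanSpace ℝ (Fin n)) := by
    rw [← Finset.smul_sum, hd, smul_zero]
  have hrw : (∑ i, h (p + d i) • d i) - ∑ i, ⟪d i, gradient h p⟫_ℝ • d i
      = ∑ i, (h (p + d i) - h p - ⟪gradient h p, d i⟫_ℝ) • d i := by
    simp only [sub_smul, Finset.sum_sub_distrib, hzero, sub_zero, real_inner_comm]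
  rw [hrw]
  calc ‖∑ i, (h (p + d i) - h p - ⟪gradient h p, d i⟫_ℝ) • d i‖
      ≤ ∑ i, ‖(h (p + d i) - h p - ⟪gradient h p, d i⟫_ℝ) • d i‖ :=
        norm_sum_le _ _
    _ ≤ ∑ i, ϑ * ‖d i‖ ^ 3 := by
        refine Finset.sum_le_sum fun i _ => ?_
        rw [norm_smul, Real.norm_eq_abs]
        calc |h (p + d i) - h p - ⟪gradient h p, d i⟫_ℝ| * ‖d i‖
            ≤ (ϑ * ‖d i‖ ^ 2) * ‖d i‖ := by
              exact mul_le_mul_of_nonneg_right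
                (stmt_16_aux h hh ϑ hlip p (d i)) (norm_nonneg _)
          _ = ϑ * ‖d i‖ ^ 3 := by ring
    _ = ϑ * ∑ i, ‖d i‖ ^ 3 := (Finset.mul_sum _ _ _).symm
end
end
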